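/- Let ε > 0 and let D be an oriented graph on n vertices such that e(B,A) ≥ ē(A,B)/3 − (ε/3)·n^2 for all subsets A, B of V(D), where ē(A,B) = e(A,B) + e(B,A). Let H be a partially oriented graph on k vertices with v⃗e(H) oriented edges. Then hom(H,D) ≥ hom(H̄,D)/3^{v⃗e(H)} − (1 − 3^{−v⃗e(H)})·(ε/2)·n^k. -/

import Mathlib

open Finset

/-- The number of arcs from `A` to `B` in the oriented graph with arc relation `Adj`. -/
def arcsFrom {V : Type*} (Adj : V → V → Prop) [DecidableRel Adj] (A B : Finset V) : ℕ :=
  ((A ×ˢ B).filter fun p => Adj p.1 p.2).card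

/-- The total number of arcs (for the oriented edges of a partially oriented graph, each
oriented edge is counted exactly once since the orientation relation is asymmetric). -/
def numArcs {V : Type*} [Fintype V] (Adj : V → V → Prop) [DecidableRel Adj] : ℕ :=
  arcsFrom Adj Finset.univ Finset.univ

/-- `hom(H,D)` for a partially oriented graph `H` given by underlying edge relation
`Ebar` and orientation relation `O`: maps `φ` sending each oriented edge of `H` to an arc
of `D` with the same orientation, and each (unoriented) edge of `H̄` to an arc of `D` in
one of the two directions. -/
def homPartialCount {W V : Type*} [Fintype W] [DecidableEq W] [Fintype V]
    (Ebar : W → W → Prop) [DecidableRel Ebar] (O : W → W → Prop) [DecidableRel O]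
    (Adj : V → V → Prop) [DecidableRel Adj] : ℕ :=
  (Finset.univ.filter fun φ : W → V =>
      (∀ x y : W, O x y → Adj (φ x) (φ y)) ∧
      (∀ x y : W, Ebar x y → Adj (φ x) (φ y) ∨ Adj (φ y) (φ x))).card

/-- `hom(H̄,D)`: the number of maps `φ : V(H) → V(D)` sending every edge of `H̄` to an arc
of `D` in one of the two directions. -/
def homBarCount {W V : Type*} [Fintype W] [DecidableEq W] [Fintype V]
    (Ebar : W → W → Prop) [DecidableRel Ebar] (Adj : V → V → Prop) [DecidableRel Adj] : ℕ :=
  (Finset.univ.filter fun φ : W → V =>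
      ∀ x y : W, Ebar x y → Adj (φ x) (φ y) ∨ Adj (φ y) (φ x)).card

lemma count_swap {V : Type*} [DecidableEq V] (Adj : V → V → Prop) [DecidableRel Adj]
    (A B : Finset V) :
    ((A ×ˢ B).filter fun q => Adj q.2 q.1).card = arcsFrom Adj B A := by
  unfold arcsFrom
  refine Finset.card_bij (fun q _ => q.swap) ?_ ?_ ?_
  · intro q hq
    obtain ⟨hm, hA⟩ := Finset.mem_filter.mp hq
    obtain ⟨h1, h2⟩ := Finset.mem_product.mp hm
    exact Finset.mem_filter.mpr ⟨Finset.mem_product.mpr ⟨h2, h1⟩, hA⟩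
  · intro a ha b hb h
    exact Prod.swap_injective h
  · intro q hq
    obtain ⟨hm, hA⟩ := Finset.mem_filter.mp hq
    obtain ⟨h1, h2⟩ := Finset.mem_product.mp hm
    exact ⟨q.swap, Finset.mem_filter.mpr ⟨Finset.mem_product.mpr ⟨h2, h1⟩, hA⟩, Prod.swap_swap q⟩

lemma split_or {V : Type*} [DecidableEq V] (Adj : V → V → Prop) [DecidableRel Adj]
    (hD : ∀ a b : V, Adj a b → ¬ Adj b a) (A B : Finset V) :
    ((A ×ˢ B).filter fun q => Adj q.1 q.2 ∨ Adj q.2 q.1).card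
      = arcsFrom Adj A B + arcsFrom Adj B A := by
  rw [Finset.filter_or, Finset.card_union_of_disjoint, count_swap]
  · rfl
  · rw [Finset.disjoint_left]
    intro q hq1 hq2
    exact hD _ _ (Finset.mem_filter.mp hq1).2 (Finset.mem_filter.mp hq2).2

lemma fiber_count {W V : Type*} [DecidableEq W] [DecidableEq V] (x y : W) (hxy : x ≠ y)
    (F : Finset (W → V))
    (hF : ∀ φ φ', φ ∈ F → φ' ∈ F → Function.update φ y (φ' y) ∈ F)
    (hagree : ∀ φ φ', φ ∈ F → φ' ∈ F → ∀ z, z ≠ x → z ≠ y → φ z = φ' z)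
    (p : V → V → Prop) [DecidableRel p] :
    (F.filter fun φ => p (φ x) (φ y)).card
      = (((F.image fun φ => φ x) ×ˢ (F.image fun φ => φ y)).filter fun q => p q.1 q.2).card := by
  refine Finset.card_bij (fun φ _ => (φ x, φ y)) ?_ ?_ ?_
  · intro φ hφ
    obtain ⟨h1, h2⟩ := Finset.mem_filter.mp hφ
    exact Finset.mem_filter.mpr ⟨Finset.mem_product.mpr
      ⟨Finset.mem_image_of_mem _ h1, Finset.mem_image_of_mem _ h1⟩, h2⟩
  · intro φ hφ φ' hφ' h
    have hx : φ x = φ' x := congrArg Prod.fst h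
    have hy : φ y = φ' y := congrArg Prod.snd h
    funext z
    by_cases hzx : z = x
    · subst hzx; exact hx
    · by_cases hzy : z = y
      · subst hzy; exact hy
      · exact hagree φ φ' (Finset.mem_filter.mp hφ).1 (Finset.mem_filter.mp hφ').1 z hzx hzy
  · rintro ⟨a, b⟩ hq
    obtain ⟨hmem, hp⟩ := Finset.mem_filter.mp hq
    obtain ⟨hq1, hq2⟩ := Finset.mem_product.mp hmem
    obtain ⟨φ₁, h1, hx1⟩ := Finset.mem_image.mp hq1
    obtain ⟨φ₂, h2, hy2⟩ := Finset.mem_image.mp hq2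
    have hχx : Function.update φ₁ y (φ₂ y) x = φ₁ x := Function.update_of_ne hxy _ _
    have hχy : Function.update φ₁ y (φ₂ y) y = φ₂ y := Function.update_self _ _ _
    refine ⟨Function.update φ₁ y (φ₂ y), Finset.mem_filter.mpr ⟨hF φ₁ φ₂ h1 h2, ?_⟩, ?_⟩
    · rw [hχx, hχy, hx1, hy2]; exact hp
    · show (Function.update φ₁ y (φ₂ y) x, Function.update φ₁ y (φ₂ y) y) = (a, b)
      rw [hχx, hχy, hx1, hy2]

lemma step {W V : Type*} [Fintype W] [DecidableEq W] [Fintype V] [DecidableEq V]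
    (Adj : V → V → Prop) [DecidableRel Adj]
    (hD : ∀ a b : V, Adj a b → ¬ Adj b a)
    (ε : ℝ) (hε : 0 < ε)
    (hbias : ∀ A B : Finset V, (arcsFrom Adj B A : ℝ) ≥
        ((arcsFrom Adj A B : ℝ) + (arcsFrom Adj B A : ℝ)) / 3 -
          ε / 3 * (Fintype.card V : ℝ) ^ 2)
    (x y : W) (hxy : x ≠ y) (S : Finset (W → V))
    (hprod : ∀ φ φ', φ ∈ S → φ' ∈ S → (∀ z, z ≠ x → z ≠ y → φ z = φ' z) →
      Function.update φ y (φ' y) ∈ S) :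
    ((S.filter fun φ => Adj (φ x) (φ y)).card : ℝ) ≥
      ((S.filter fun φ => Adj (φ x) (φ y) ∨ Adj (φ y) (φ x)).card : ℝ) / 3 -
        ε / 3 * (Fintype.card V : ℝ) ^ (Fintype.card W) := by
  rcases isEmpty_or_nonempty V with hV | hV
  · have hS : S = ∅ := Finset.eq_empty_of_forall_notMem fun φ _ => hV.elim (φ x)
    have hW : 0 < Fintype.card W := Fintype.card_pos_iff.mpr ⟨x⟩
    have hcV : (Fintype.card V : ℝ) = 0 := by
      rw [Fintype.card_eq_zero]; norm_num
    rw [hS, hcV, zero_pow hW.ne']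
    simp
  · obtain ⟨v0⟩ := hV
    set r : (W → V) → (W → V) := fun φ => Function.update (Function.update φ x v0) y v0
      with hr
    set I := S.image r with hI
    have hmem : ∀ φ ∈ S, r φ ∈ I := fun φ h => Finset.mem_image_of_mem r h
    have hrval : ∀ (φ : W → V) (z : W), z ≠ x → z ≠ y → r φ z = φ z := by
      intro φ z hzx hzy
      show Function.update (Function.update φ x v0) y v0 z = φ z
      rw [Function.update_of_ne hzy, Function.update_of_ne hzx]
    have hrx : ∀ ψ ∈ I, ψ x = v0 := by
      intro ψ hψ
      obtain ⟨φ, _, rfl⟩ := Finset.mem_image.mp hψ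
      show Function.update (Function.update φ x v0) y v0 x = v0
      rw [Function.update_of_ne hxy, Function.update_self]
    have hry : ∀ ψ ∈ I, ψ y = v0 := by
      intro ψ hψ
      obtain ⟨φ, _, rfl⟩ := Finset.mem_image.mp hψ
      show Function.update (Function.update φ x v0) y v0 y = v0
      rw [Function.update_self]
    have hfib : ∀ (ψ φ φ' : W → V), r φ = ψ → r φ' = ψ →
        ∀ z, z ≠ x → z ≠ y → φ z = φ' z := by
      intro ψ φ φ' h h' z hzx hzy
      have h2 := congrFun (h.trans h'.symm) z
      rwa [hrval φ z hzx hzy, hrval φ' z hzx hzy] at h2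
    have hrupd : ∀ (φ : W → V) (b : V), r (Function.update φ y b) = r φ := by
      intro φ b
      funext z
      show Function.update (Function.update (Function.update φ y b) x v0) y v0 z
          = Function.update (Function.update φ x v0) y v0 z
      by_cases hzy : z = y
      · subst hzy; simp
      · rw [Function.update_of_ne hzy, Function.update_of_ne hzy]
        by_cases hzx : z = x
        · subst hzx; simp
        · rw [Function.update_of_ne hzx, Function.update_of_ne hzx, Function.update_of_ne hzy]
    have hFmem : ∀ (ψ : W → V) (φ φ' : W → V),
        φ ∈ S.filter (fun φ => r φ = ψ) → φ' ∈ S.filter (fun φ => r φ = ψ) →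
        Function.update φ y (φ' y) ∈ S.filter (fun φ => r φ = ψ) := by
      intro ψ φ φ' h h'
      obtain ⟨hS1, hr1⟩ := Finset.mem_filter.mp h
      obtain ⟨hS2, hr2⟩ := Finset.mem_filter.mp h'
      exact Finset.mem_filter.mpr
        ⟨hprod φ φ' hS1 hS2 (hfib ψ φ φ' hr1 hr2), (hrupd φ (φ' y)).trans hr1⟩
    have hFagree : ∀ (ψ : W → V) (φ φ' : W → V),
        φ ∈ S.filter (fun φ => r φ = ψ) → φ' ∈ S.filter (fun φ => r φ = ψ) →
        ∀ z, z ≠ x → z ≠ y → φ z = φ' z := by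
      intro ψ φ φ' h h'
      exact hfib ψ φ φ' (Finset.mem_filter.mp h).2 (Finset.mem_filter.mp h').2
    have key1 : (S.filter fun φ => Adj (φ x) (φ y)).card
        = ∑ ψ ∈ I, arcsFrom Adj ((S.filter fun φ => r φ = ψ).image fun φ => φ x)
            ((S.filter fun φ => r φ = ψ).image fun φ => φ y) := by
      rw [Finset.card_eq_sum_card_fiberwise (f := r) (t := I)
        (fun φ hφ => hmem φ (Finset.mem_filter.mp hφ).1)]
      refine Finset.sum_congr rfl fun ψ hψ => ?_
      rw [Finset.filter_comm]
      exact fiber_count x y hxy _ (hFmem ψ) (hFagree ψ) Adj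
    have key2 : (S.filter fun φ => Adj (φ x) (φ y) ∨ Adj (φ y) (φ x)).card
        = ∑ ψ ∈ I, (arcsFrom Adj ((S.filter fun φ => r φ = ψ).image fun φ => φ x)
            ((S.filter fun φ => r φ = ψ).image fun φ => φ y)
          + arcsFrom Adj ((S.filter fun φ => r φ = ψ).image fun φ => φ y)
            ((S.filter fun φ => r φ = ψ).image fun φ => φ x)) := by
      rw [Finset.card_eq_sum_card_fiberwise (f := r) (t := I)
        (fun φ hφ => hmem φ (Finset.mem_filter.mp hφ).1)]
      refine Finset.sum_congr rfl fun ψ hψ => ?_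
      rw [Finset.filter_comm]
      rw [fiber_count x y hxy _ (hFmem ψ) (hFagree ψ) (fun a b => Adj a b ∨ Adj b a)]
      exact split_or Adj hD _ _
    have hIcard : (I.card : ℝ) * (Fintype.card V : ℝ) ^ 2
        ≤ (Fintype.card V : ℝ) ^ (Fintype.card W) := by
      have hnat : I.card * Fintype.card V ^ 2 ≤ Fintype.card V ^ Fintype.card W := by
        have hinj : Set.InjOn
            (fun q : (W → V) × (V × V) =>
              Function.update (Function.update q.1 x q.2.1) y q.2.2)
            ↑(I ×ˢ (Finset.univ : Finset (V × V))) := by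
          rintro ⟨ψ, a, b⟩ hq ⟨ψ', a', b'⟩ hq' h
          simp only [Finset.coe_product, Set.mem_prod, Finset.mem_coe] at hq hq'
          have hψI : ψ ∈ I := hq.1
          have hψI' : ψ' ∈ I := hq'.1
          have ha : a = a' := by
            have := congrFun h x
            simpa [Function.update_of_ne hxy] using this
          have hb : b = b' := by
            have := congrFun h y
            simpa using this
          have hψ : ψ = ψ' := by
            funext z
            by_cases hzy : z = y
            · subst hzy; rw [hry ψ hψI, hry ψ' hψI']
            · by_cases hzx : z = x
              · subst hzx; rw [hrx ψ hψI, hrx ψ' hψI']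
              · have := congrFun h z
                simpa [Function.update_of_ne hzy, Function.update_of_ne hzx] using this
          rw [ha, hb, hψ]
        have hle := Finset.card_le_card_of_injOn _
          (fun _ _ => Finset.mem_univ _) hinj
        rw [Finset.card_product, Finset.card_univ, Finset.card_univ,
          Fintype.card_prod, Fintype.card_fun] at hle
        calc I.card * Fintype.card V ^ 2
            = I.card * (Fintype.card V * Fintype.card V) := by ring
          _ ≤ _ := hle
      exact_mod_cast hnat
    rw [key1, key2]
    push_cast
    have hbound : ∀ ψ ∈ I,
        ((arcsFrom Adj ((S.filter fun φ => r φ = ψ).image fun φ => φ x)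
            ((S.filter fun φ => r φ = ψ).image fun φ => φ y) : ℝ)
          + (arcsFrom Adj ((S.filter fun φ => r φ = ψ).image fun φ => φ y)
            ((S.filter fun φ => r φ = ψ).image fun φ => φ x) : ℝ)) / 3
          - ε / 3 * (Fintype.card V : ℝ) ^ 2
        ≤ (arcsFrom Adj ((S.filter fun φ => r φ = ψ).image fun φ => φ x)
            ((S.filter fun φ => r φ = ψ).image fun φ => φ y) : ℝ) := by
      intro ψ _
      have := hbias ((S.filter fun φ => r φ = ψ).image fun φ => φ y)
        ((S.filter fun φ => r φ = ψ).image fun φ => φ x)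
      linarith
    have hsum := Finset.sum_le_sum hbound
    rw [Finset.sum_sub_distrib, Finset.sum_const, nsmul_eq_mul, ← Finset.sum_div] at hsum
    have hfin : (I.card : ℝ) * (ε / 3 * (Fintype.card V : ℝ) ^ 2)
        ≤ ε / 3 * (Fintype.card V : ℝ) ^ (Fintype.card W) := by
      nlinarith [hIcard, hε.le]
    push_cast at hsum
    linarith


def delO {W : Type*} (O : W → W → Prop) (x y : W) : W → W → Prop :=
  fun u v => O u v ∧ ¬(u = x ∧ v = y)

instance {W : Type*} (O : W → W → Prop) [DecidableRel O] [DecidableEq W] (x y : W) :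
    DecidableRel (delO O x y) := fun u v => by unfold delO; infer_instance

def delE {W : Type*} (E : W → W → Prop) (x y : W) : W → W → Prop :=
  fun u v => E u v ∧ ¬((u = x ∧ v = y) ∨ (u = y ∧ v = x))

instance {W : Type*} (E : W → W → Prop) [DecidableRel E] [DecidableEq W] (x y : W) :
    DecidableRel (delE E x y) := fun u v => by unfold delE; infer_instance


lemma main_aux {W V : Type*} [Fintype W] [DecidableEq W] [Fintype V] [DecidableEq V]
    (Ebar : W → W → Prop) [DecidableRel Ebar]
    (hEsymm : ∀ x y : W, Ebar x y → Ebar y x) (hEirr : ∀ x : W, ¬ Ebar x x)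
    (Adj : V → V → Prop) [DecidableRel Adj] (hD : ∀ x y : V, Adj x y → ¬ Adj y x)
    (ε : ℝ) (hε : 0 < ε)
    (hbias : ∀ A B : Finset V, (arcsFrom Adj B A : ℝ) ≥
        ((arcsFrom Adj A B : ℝ) + (arcsFrom Adj B A : ℝ)) / 3 -
          ε / 3 * (Fintype.card V : ℝ) ^ 2)
    (m : ℕ) :
    ∀ (O : W → W → Prop) (iO : DecidableRel O),
      (∀ x y : W, O x y → Ebar x y) → (∀ x y : W, O x y → ¬ O y x) →
      (@numArcs W _ O iO = m) →
      ((Finset.univ.filter fun φ : W → V =>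
          (∀ x y : W, O x y → Adj (φ x) (φ y)) ∧
          (∀ x y : W, Ebar x y → Adj (φ x) (φ y) ∨ Adj (φ y) (φ x))).card : ℝ) ≥
        ((Finset.univ.filter fun φ : W → V =>
          ∀ x y : W, Ebar x y → Adj (φ x) (φ y) ∨ Adj (φ y) (φ x)).card : ℝ) / 3 ^ m -
          (1 - 1 / 3 ^ m) * (ε / 2) * (Fintype.card V : ℝ) ^ Fintype.card W := by
  induction m with
  | zero =>
    intro O iO hOE hOasym hm
    letI : DecidableRel O := iO
    have hO0 : ∀ u v : W, ¬ O u v := by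
      intro u v h
      have hmem : (u, v) ∈ (Finset.univ ×ˢ Finset.univ).filter
          (fun p : W × W => O p.1 p.2) :=
        Finset.mem_filter.mpr ⟨Finset.mem_product.mpr ⟨Finset.mem_univ _, Finset.mem_univ _⟩, h⟩
      have : ((Finset.univ ×ˢ Finset.univ).filter (fun p : W × W => O p.1 p.2)).card = 0 := hm
      rw [Finset.card_eq_zero] at this
      rw [this] at hmem
      exact absurd hmem (Finset.notMem_empty _)
    have heq : (Finset.univ.filter fun φ : W → V =>
          (∀ x y : W, O x y → Adj (φ x) (φ y)) ∧
          (∀ x y : W, Ebar x y → Adj (φ x) (φ y) ∨ Adj (φ y) (φ x))).card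
        = (Finset.univ.filter fun φ : W → V =>
          ∀ x y : W, Ebar x y → Adj (φ x) (φ y) ∨ Adj (φ y) (φ x)).card := by
      congr 1
      apply Finset.filter_congr
      intro φ _
      constructor
      · exact fun h => h.2
      · exact fun h => ⟨fun u v hO => absurd hO (hO0 u v), h⟩
    rw [heq]
    simp
  | succ m ih =>
    intro O iO hOE hOasym hm
    letI : DecidableRel O := iO
    -- pick an oriented edge (x, y)
    have hpos : 0 < ((Finset.univ ×ˢ Finset.univ).filter (fun p : W × W => O p.1 p.2)).card := by
      have : ((Finset.univ ×ˢ Finset.univ).filter (fun p : W × W => O p.1 p.2)).card = m + 1 := hm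
      omega
    obtain ⟨p, hp⟩ := Finset.card_pos.mp hpos
    obtain ⟨x, y⟩ := p
    have hOxy : O x y := (Finset.mem_filter.mp hp).2
    have hExy : Ebar x y := hOE x y hOxy
    have hxy : x ≠ y := fun h => hEirr x (h ▸ hExy)
    -- remove the edge
    set S₀ : Finset (W → V) := Finset.univ.filter fun φ : W → V =>
        (∀ u v : W, delO O x y u v → Adj (φ u) (φ v)) ∧
        (∀ u v : W, delE Ebar x y u v → Adj (φ u) (φ v) ∨ Adj (φ v) (φ u)) with hS₀def
    -- membership characterization
    have hS₀mem : ∀ φ : W → V, φ ∈ S₀ ↔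
        ((∀ u v : W, delO O x y u v → Adj (φ u) (φ v)) ∧
        (∀ u v : W, delE Ebar x y u v → Adj (φ u) (φ v) ∨ Adj (φ v) (φ u))) := by
      intro φ
      rw [hS₀def, Finset.mem_filter]
      simp
    -- product structure of S₀ at (x, y)
    have hprod : ∀ φ φ', φ ∈ S₀ → φ' ∈ S₀ → (∀ z, z ≠ x → z ≠ y → φ z = φ' z) →
        Function.update φ y (φ' y) ∈ S₀ := by
      intro φ φ' hφ hφ' hag
      obtain ⟨hO1, hE1⟩ := (hS₀mem φ).mp hφ
      obtain ⟨hO2, hE2⟩ := (hS₀mem φ').mp hφ'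
      set χ : W → V := Function.update φ y (φ' y) with hχ
      have hχy : ∀ z, z = y → χ z = φ' z := by
        intro z hz; rw [hz]; exact Function.update_self _ _ _
      have hχne : ∀ z, z ≠ y → χ z = φ z := fun z hz => Function.update_of_ne hz _ _
      refine (hS₀mem χ).mpr ⟨?_, ?_⟩
      · intro u v huv
        have hOuv : O u v := huv.1
        by_cases hu : u = y
        · by_cases hv : v = y
          · rw [hu, hv] at hOuv
            exact absurd (hOE _ _ hOuv) (hEirr y)
          · by_cases hvx : v = x
            · rw [hu, hvx] at hOuv
              exact absurd hOxy (hOasym _ _ hOuv)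
            · rw [hχy u hu, hχne v hv, hag v hvx hv]
              exact hO2 u v huv
        · by_cases hv : v = y
          · have hux : u ≠ x := by
              rintro rfl
              exact huv.2 ⟨rfl, hv⟩
            rw [hχy v hv, hχne u hu, hag u hux hu]
            exact hO2 u v huv
          · rw [hχne u hu, hχne v hv]
            exact hO1 u v huv
      · intro u v huv
        have hEuv : Ebar u v := huv.1
        by_cases hu : u = y
        · by_cases hv : v = y
          · rw [hu, hv] at hEuv
            exact absurd hEuv (hEirr y)
          · by_cases hvx : v = x
            · exact absurd huv.2 (fun h => h (Or.inr ⟨hu, hvx⟩))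
            · rw [hχy u hu, hχne v hv, hag v hvx hv]
              exact hE2 u v huv
        · by_cases hv : v = y
          · have hux : u ≠ x := by
              rintro rfl
              exact huv.2 (Or.inl ⟨rfl, hv⟩)
            rw [hχy v hv, hχne u hu, hag u hux hu]
            exact hE2 u v huv
          · rw [hχne u hu, hχne v hv]
            exact hE1 u v huv
    -- identification of the two hom counts
    have e1 : (Finset.univ.filter fun φ : W → V =>
          (∀ u v : W, O u v → Adj (φ u) (φ v)) ∧
          (∀ u v : W, Ebar u v → Adj (φ u) (φ v) ∨ Adj (φ v) (φ u))).card
        = (S₀.filter fun φ => Adj (φ x) (φ y)).card := by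
      congr 1
      ext φ
      rw [Finset.mem_filter, Finset.mem_filter, hS₀mem φ]
      simp only [Finset.mem_univ, true_and]
      constructor
      · rintro ⟨hO1, hE1⟩
        exact ⟨⟨fun u v h => hO1 u v h.1, fun u v h => hE1 u v h.1⟩, hO1 x y hOxy⟩
      · rintro ⟨⟨hO1, hE1⟩, hA⟩
        constructor
        · intro u v h
          by_cases hc : u = x ∧ v = y
          · obtain ⟨rfl, rfl⟩ := hc; exact hA
          · exact hO1 u v ⟨h, hc⟩
        · intro u v h
          by_cases hc : u = x ∧ v = y
          · obtain ⟨rfl, rfl⟩ := hc; exact Or.inl hA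
          · by_cases hc2 : u = y ∧ v = x
            · obtain ⟨rfl, rfl⟩ := hc2; exact Or.inr hA
            · exact hE1 u v ⟨h, fun hor => hor.elim hc hc2⟩
    have e2 : (Finset.univ.filter fun φ : W → V =>
          (∀ u v : W, delO O x y u v → Adj (φ u) (φ v)) ∧
          (∀ u v : W, Ebar u v → Adj (φ u) (φ v) ∨ Adj (φ v) (φ u))).card
        = (S₀.filter fun φ => Adj (φ x) (φ y) ∨ Adj (φ y) (φ x)).card := by
      congr 1
      ext φ
      rw [Finset.mem_filter, Finset.mem_filter, hS₀mem φ]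
      simp only [Finset.mem_univ, true_and]
      constructor
      · rintro ⟨hO1, hE1⟩
        exact ⟨⟨hO1, fun u v h => hE1 u v h.1⟩, hE1 x y hExy⟩
      · rintro ⟨⟨hO1, hE1⟩, hA⟩
        refine ⟨hO1, ?_⟩
        intro u v h
        by_cases hc : u = x ∧ v = y
        · obtain ⟨rfl, rfl⟩ := hc; exact hA
        · by_cases hc2 : u = y ∧ v = x
          · obtain ⟨rfl, rfl⟩ := hc2; exact hA.symm
          · exact hE1 u v ⟨h, fun hor => hor.elim hc hc2⟩
    -- numArcs of O'
    have hnum' : numArcs (delO O x y) = m := by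
      have hins : (Finset.univ ×ˢ Finset.univ).filter (fun p : W × W => O p.1 p.2)
          = insert (x, y) ((Finset.univ ×ˢ Finset.univ).filter (fun p : W × W => delO O x y p.1 p.2)) := by
        ext q
        rw [Finset.mem_insert, Finset.mem_filter, Finset.mem_filter]
        simp only [Finset.mem_product, Finset.mem_univ, and_self, true_and]
        constructor
        · intro h
          by_cases hc : q = (x, y)
          · exact Or.inl hc
          · refine Or.inr ⟨h, fun hc2 => hc ?_⟩
            exact Prod.ext hc2.1 hc2.2
        · rintro (rfl | ⟨h, _⟩)
          · exact hOxy
          · exact h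
      have hnotmem : (x, y) ∉ (Finset.univ ×ˢ Finset.univ).filter (fun p : W × W => delO O x y p.1 p.2) := by
        intro hmem
        exact (Finset.mem_filter.mp hmem).2.2 ⟨rfl, rfl⟩
      have : ((Finset.univ ×ˢ Finset.univ).filter (fun p : W × W => O p.1 p.2)).card
          = ((Finset.univ ×ˢ Finset.univ).filter (fun p : W × W => delO O x y p.1 p.2)).card + 1 := by
        rw [hins, Finset.card_insert_of_notMem hnotmem]
      have hm2 : ((Finset.univ ×ˢ Finset.univ).filter (fun p : W × W => O p.1 p.2)).card = m + 1 := hm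
      unfold numArcs arcsFrom
      exact Nat.succ_injective (this.symm.trans hm2)
    -- apply ih and step
    have hO'E : ∀ u v : W, delO O x y u v → Ebar u v := fun u v h => hOE u v h.1
    have hO'asym : ∀ u v : W, delO O x y u v → ¬ delO O x y v u := fun u v h h' => hOasym u v h.1 h'.1
    have hih := ih (delO O x y) inferInstance hO'E hO'asym hnum'
    have hstep := step Adj hD ε hε hbias x y hxy S₀ hprod
    rw [e1]
    rw [e2] at hih
    -- algebra
    have hp3 : (0:ℝ) < 3 ^ m := by positivity
    have hN : (0:ℝ) ≤ (Fintype.card V : ℝ) ^ Fintype.card W := by positivity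
    have halg : ((((Finset.univ.filter fun φ : W → V =>
          ∀ u v : W, Ebar u v → Adj (φ u) (φ v) ∨ Adj (φ v) (φ u)).card : ℝ) / 3 ^ m -
          (1 - 1 / 3 ^ m) * (ε / 2) * (Fintype.card V : ℝ) ^ Fintype.card W) / 3 -
          ε / 3 * (Fintype.card V : ℝ) ^ Fintype.card W)
        = ((Finset.univ.filter fun φ : W → V =>
          ∀ u v : W, Ebar u v → Adj (φ u) (φ v) ∨ Adj (φ v) (φ u)).card : ℝ) / 3 ^ (m + 1) -
          (1 - 1 / 3 ^ (m + 1)) * (ε / 2) * (Fintype.card V : ℝ) ^ Fintype.card W := by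
      rw [pow_succ]
      field_simp
      ring
    rw [← halg]
    have := hih
    linarith

/-- Proposition: if `D` satisfies `e(B,A) ≥ ē(A,B)/3 - (ε/3) n²` for all `A, B ⊆ V(D)`,
and `H` is a partially oriented graph on `k` vertices with `v⃗e(H)` oriented edges, then
`hom(H,D) ≥ hom(H̄,D)/3^{v⃗e(H)} - (1 - 3^{-v⃗e(H)}) (ε/2) n^k`. -/
theorem stmt6 {W V : Type*} [Fintype W] [DecidableEq W] [Fintype V] [DecidableEq V]
    (Ebar : W → W → Prop) [DecidableRel Ebar] (O : W → W → Prop) [DecidableRel O]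
    (hEsymm : ∀ x y : W, Ebar x y → Ebar y x) (hEirr : ∀ x : W, ¬ Ebar x x)
    (hOE : ∀ x y : W, O x y → Ebar x y) (hOasym : ∀ x y : W, O x y → ¬ O y x)
    (Adj : V → V → Prop) [DecidableRel Adj] (hD : ∀ x y : V, Adj x y → ¬ Adj y x)
    (ε : ℝ) (hε : 0 < ε)
    (hbias : ∀ A B : Finset V, (arcsFrom Adj B A : ℝ) ≥
        ((arcsFrom Adj A B : ℝ) + (arcsFrom Adj B A : ℝ)) / 3 -
          ε / 3 * (Fintype.card V : ℝ) ^ 2) :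
    (homPartialCount Ebar O Adj : ℝ) ≥
      (homBarCount Ebar Adj : ℝ) / 3 ^ numArcs O -
        (1 - 1 / 3 ^ numArcs O) * (ε / 2) * (Fintype.card V : ℝ) ^ Fintype.card W := by
  exact main_aux Ebar hEsymm hEirr Adj hD ε hε hbias (numArcs O) O inferInstance hOE hOasym rfl
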